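/- arXiv:2402.06199 — 8 statements merged into one kernel-verified Lean document; each statement's English description precedes it below -/
import Mathlib

section
/- Let v : Fin n → ℝ² be a closed polygon (indices mod n), with edge vectors e_k = v_{k+1} − v_k, edge midpoints m_k = (v_k + v_{k+1})/2, scaled normals rot(e_k) where rot(x, y) = (y, −x), and signed area A = (1/2) ∑_k ((v_k)_1 (v_{k+1})_2 − (v_{k+1})_1 (v_k)_2). Then for every point p ∈ ℝ² and every vector u ∈ ℝ², ∑_k ⟪m_k − p, u⟫ • rot(e_k) = A • u; equivalently, the dyadic sum ∑_k rot(e_k) ⊗ (m_k − p) equals A times the identity matrix. -/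
open scoped RealInnerProductSpace BigOperators

/-- The clockwise quarter-turn `rot (x, y) = (y, -x)` in the plane. -/
noncomputable def rot (w : EuclideanSpace ℝ (Fin 2)) : EuclideanSpace ℝ (Fin 2) :=
  (WithLp.equiv 2 (Fin 2 → ℝ)).symm ![w 1, -(w 0)]

/-- Reindexing a sum over `Fin n` by the shift `k ↦ k + 1`. -/
lemma shift_sum' {n : ℕ} [NeZero n] (f : Fin n → ℝ) :
    ∑ k : Fin n, f (k + 1) = ∑ k : Fin n, f k :=
  Fintype.sum_equiv (Equiv.addRight 1) _ _ (fun _ => rfl)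

/-- Telescoping: if each `f k` equals `g k` plus a difference `h (k+1) - h k`,
the cyclic sums of `f` and `g` agree. -/
lemma telescope' {n : ℕ} [NeZero n] (f g h : Fin n → ℝ)
    (H : ∀ k, f k = g k + (h (k + 1) - h k)) :
    ∑ k : Fin n, f k = ∑ k : Fin n, g k := by
  rw [Finset.sum_congr rfl (fun k _ => H k), Finset.sum_add_distrib,
    Finset.sum_sub_distrib, shift_sum']
  ring

/-- For a closed polygon `v : Fin n → ℝ²` (indices mod `n`) with edge vectors
`e k = v (k+1) - v k`, edge midpoints `m k = (v k + v (k+1))/2`, scaled outward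
normals `rot (e k)` and shoelace signed area `A`, for every point `p` and every
vector `u` one has `∑ k ⟪m k - p, u⟫ • rot (e k) = A • u`, i.e. the dyadic sum
`∑ k rot (e k) ⊗ (m k - p)` of the Green-Gauss scheme equals `A` times the identity. -/
theorem greenGauss_dyadic_sum_eq_area_smul_id (n : ℕ) [NeZero n]
    (v : Fin n → EuclideanSpace ℝ (Fin 2))
    (p u : EuclideanSpace ℝ (Fin 2)) :
    ∑ k : Fin n, ⟪((2 : ℝ)⁻¹ • (v k + v (k + 1))) - p, u⟫ • rot (v (k + 1) - v k)
      = ((1 / 2 : ℝ) * ∑ k : Fin n,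
          (v k 0 * v (k + 1) 1 - v (k + 1) 0 * v k 1)) • u := by
  ext i
  rw [show (∑ k : Fin n, ⟪((2 : ℝ)⁻¹ • (v k + v (k + 1))) - p, u⟫ • rot (v (k + 1) - v k)) i
      = ∑ k : Fin n, (⟪((2 : ℝ)⁻¹ • (v k + v (k + 1))) - p, u⟫ • rot (v (k + 1) - v k)) i
      from by simp only [WithLp.ofLp_sum, Finset.sum_apply]]
  simp only [PiLp.smul_apply, smul_eq_mul, PiLp.inner_apply, RCLike.inner_apply',
    conj_trivial, Fin.sum_univ_two, PiLp.sub_apply, PiLp.add_apply, rot,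
    WithLp.equiv_symm_apply, WithLp.ofLp_toLp]
  fin_cases i <;>
    simp only [Fin.zero_eta, Fin.mk_one, Matrix.cons_val_zero, Matrix.cons_val_one,
      Matrix.head_cons]
  · rw [telescope'
      (fun k => ((2⁻¹ * (v k 0 + v (k + 1) 0) - p 0) * u 0
          + (2⁻¹ * (v k 1 + v (k + 1) 1) - p 1) * u 1) * (v (k + 1) 1 - v k 1))
      (fun k => 1 / 2 * (v k 0 * v (k + 1) 1 - v (k + 1) 0 * v k 1) * u 0)
      (fun k => u 0 * (2⁻¹ * v k 0 * v k 1 - p 0 * v k 1)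
          + u 1 * (2⁻¹ * v k 1 * v k 1 - p 1 * v k 1))
      (fun k => by ring)]
    rw [← Finset.sum_mul, ← Finset.mul_sum]
  · rw [telescope'
      (fun k => ((2⁻¹ * (v k 0 + v (k + 1) 0) - p 0) * u 0
          + (2⁻¹ * (v k 1 + v (k + 1) 1) - p 1) * u 1) * (-(v (k + 1) 0 - v k 0)))
      (fun k => 1 / 2 * (v k 0 * v (k + 1) 1 - v (k + 1) 0 * v k 1) * u 1)
      (fun k => u 0 * (p 0 * v k 0 - 2⁻¹ * v k 0 * v k 0)
          + u 1 * (p 1 * v k 0 - 2⁻¹ * v k 0 * v k 1))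
      (fun k => by ring)]
    rw [← Finset.sum_mul, ← Finset.mul_sum]
end

section
/- Let v : Fin n → ℝ² be a closed polygon (indices mod n), with edge vectors e_k = v_{k+1} − v_k, edge midpoints m_k = (v_k + v_{k+1})/2, scaled normals rot(e_k) where rot(x, y) = (y, −x), and signed area A = (1/2) ∑_k ((v_k)_1 (v_{k+1})_2 − (v_{k+1})_1 (v_k)_2). Then for every point p ∈ ℝ² and every vector u ∈ ℝ², ∑_k ⟪rot(e_k), u⟫ • (m_k − p) = A • u; equivalently, the dyadic sum ∑_k (m_k − p) ⊗ rot(e_k) equals A times the identity matrix. -/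
open scoped RealInnerProductSpace BigOperators

/-- For a closed polygon `v : Fin n → ℝ²` (indices mod `n`) with edge vectors
`e k = v (k+1) - v k`, edge midpoints `m k = (v k + v (k+1))/2`, scaled outward
normals `rot (e k)` and shoelace signed area `A`, for every point `p` and every
vector `u` one has `∑ k ⟪rot (e k), u⟫ • (m k - p) = A • u`, i.e. the dyadic sum
`∑ k (m k - p) ⊗ rot (e k)` of the Modified Green-Gauss scheme equals `A` times
the identity. -/
theorem mgg_dyadic_sum_eq_area_smul_id (n : ℕ) [NeZero n]
    (v : Fin n → EuclideanSpace ℝ (Fin 2))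
    (p u : EuclideanSpace ℝ (Fin 2)) :
    ∑ k : Fin n, ⟪rot (v (k + 1) - v k), u⟫ • (((2 : ℝ)⁻¹ • (v k + v (k + 1))) - p)
      = ((1 / 2 : ℝ) * ∑ k : Fin n,
          (v k 0 * v (k + 1) 1 - v (k + 1) 0 * v k 1)) • u := by
  have shift : ∀ f : Fin n → ℝ, ∑ k : Fin n, f (k + 1) = ∑ k : Fin n, f k := fun f =>
    Equiv.sum_comp (Equiv.addRight 1) f
  refine PiLp.ext fun i => ?_
  rw [WithLp.ofLp_sum, Finset.sum_apply]
  simp only [rot, PiLp.inner_apply, PiLp.smul_apply, PiLp.sub_apply, PiLp.add_apply,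
    WithLp.equiv_symm_apply, WithLp.ofLp_toLp, Fin.sum_univ_two, Matrix.cons_val_zero, Matrix.cons_val_one,
    Matrix.head_cons, RCLike.inner_apply, conj_trivial, smul_eq_mul]
  fin_cases i <;>
    rw [← sub_eq_zero, Finset.mul_sum, Finset.sum_mul, ← Finset.sum_sub_distrib]
  · calc ∑ x : Fin n,
        ((u 0 * (v (x + 1) 1 - v x 1) + u 1 * -(v (x + 1) 0 - v x 0)) *
            (2⁻¹ * (v x 0 + v (x + 1) 0) - p 0)
          - 1 / 2 * (v x 0 * v (x + 1) 1 - v (x + 1) 0 * v x 1) * u 0)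
        = ∑ x : Fin n,
          ((u 0 / 2 * (v (x+1) 0 * v (x+1) 1) - u 0 * p 0 * v (x+1) 1
              - u 1 / 2 * (v (x+1) 0)^2 + u 1 * p 0 * v (x+1) 0)
            - (u 0 / 2 * (v x 0 * v x 1) - u 0 * p 0 * v x 1
              - u 1 / 2 * (v x 0)^2 + u 1 * p 0 * v x 0)) :=
        Finset.sum_congr rfl (fun k _ => by ring)
      _ = 0 := by
        rw [Finset.sum_sub_distrib,
          shift (fun x => u 0 / 2 * (v x 0 * v x 1) - u 0 * p 0 * v x 1
            - u 1 / 2 * (v x 0)^2 + u 1 * p 0 * v x 0), sub_self]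
  · calc ∑ x : Fin n,
        ((u 0 * (v (x + 1) 1 - v x 1) + u 1 * -(v (x + 1) 0 - v x 0)) *
            (2⁻¹ * (v x 1 + v (x + 1) 1) - p 1)
          - 1 / 2 * (v x 0 * v (x + 1) 1 - v (x + 1) 0 * v x 1) * u 1)
        = ∑ x : Fin n,
          ((u 0 / 2 * (v (x+1) 1)^2 - u 0 * p 1 * v (x+1) 1
              - u 1 / 2 * (v (x+1) 0 * v (x+1) 1) + u 1 * p 1 * v (x+1) 0)
            - (u 0 / 2 * (v x 1)^2 - u 0 * p 1 * v x 1
              - u 1 / 2 * (v x 0 * v x 1) + u 1 * p 1 * v x 0)) :=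
        Finset.sum_congr rfl (fun k _ => by ring)
      _ = 0 := by
        rw [Finset.sum_sub_distrib,
          shift (fun x => u 0 / 2 * (v x 1)^2 - u 0 * p 1 * v x 1
            - u 1 / 2 * (v x 0 * v x 1) + u 1 * p 1 * v x 0), sub_self]
end

section
/- Let v : Fin n → ℝ² be a closed polygon (indices mod n) with edge vectors e_k = v_{k+1} − v_k, edge midpoints m_k = (v_k + v_{k+1})/2, scaled normals rot(e_k) where rot(x, y) = (y, −x), and shoelace signed area A ≠ 0. If φ : ℝ² → ℝ is affine, φ(x) = c + ⟪g, x⟫ for some c ∈ ℝ and g ∈ ℝ², then the Green-Gauss reconstruction formula is exact: (1/A) ∑_k φ(m_k) • rot(e_k) = g. -/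
open scoped RealInnerProductSpace BigOperators

/-- For a closed polygon `v : Fin n → ℝ²` (indices mod `n`) with edge vectors
`e k = v (k+1) - v k`, edge midpoints `m k = (v k + v (k+1))/2`, scaled outward
normals `rot (e k)` and nonzero shoelace signed area `A`, the Green-Gauss
reconstruction is exact for affine fields `φ x = c + ⟪g, x⟫`:
`(1/A) ∑ k φ (m k) • rot (e k) = g`. -/
theorem greenGauss_exact_for_affine (n : ℕ) [NeZero n]
    (v : Fin n → EuclideanSpace ℝ (Fin 2))
    (A : ℝ)
    (hA : A = (1 / 2 : ℝ) * ∑ k : Fin n,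
        (v k 0 * v (k + 1) 1 - v (k + 1) 0 * v k 1))
    (hA0 : A ≠ 0)
    (φ : EuclideanSpace ℝ (Fin 2) → ℝ) (c : ℝ) (g : EuclideanSpace ℝ (Fin 2))
    (hφ : ∀ x, φ x = c + ⟪g, x⟫) :
    A⁻¹ • ∑ k : Fin n, φ ((2 : ℝ)⁻¹ • (v k + v (k + 1))) • rot (v (k + 1) - v k)
      = g := by
  have key : ∀ f : Fin n → ℝ, ∑ k : Fin n, f (k + 1) = ∑ k : Fin n, f k :=
    fun f => Equiv.sum_comp (Equiv.addRight (1 : Fin n)) f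
  have tele : ∀ f : Fin n → ℝ, ∑ k : Fin n, (f (k + 1) - f k) = 0 := by
    intro f
    rw [Finset.sum_sub_distrib, key]
    ring
  have hcross : ∑ k : Fin n, (v k 0 * v (k + 1) 1 - v (k + 1) 0 * v k 1) = 2 * A := by
    rw [hA]; ring
  have h2 : ∑ k : Fin n, (v k 0 + v (k + 1) 0) * (v (k + 1) 1 - v k 1) = 2 * A := by
    calc ∑ k : Fin n, (v k 0 + v (k + 1) 0) * (v (k + 1) 1 - v k 1)
        = ∑ k : Fin n, ((v k 0 * v (k + 1) 1 - v (k + 1) 0 * v k 1)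
            + (v (k + 1) 0 * v (k + 1) 1 - v k 0 * v k 1)) :=
          Finset.sum_congr rfl (fun k _ => by ring)
      _ = 2 * A + 0 := by rw [Finset.sum_add_distrib, hcross, tele (fun k => v k 0 * v k 1)]
      _ = 2 * A := by ring
  have h3 : ∑ k : Fin n, (v k 1 + v (k + 1) 1) * (v (k + 1) 1 - v k 1) = 0 := by
    calc ∑ k : Fin n, (v k 1 + v (k + 1) 1) * (v (k + 1) 1 - v k 1)
        = ∑ k : Fin n, (v (k + 1) 1 * v (k + 1) 1 - v k 1 * v k 1) :=
          Finset.sum_congr rfl (fun k _ => by ring)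
      _ = 0 := tele (fun k => v k 1 * v k 1)
  have h4 : ∑ k : Fin n, (v k 0 + v (k + 1) 0) * (v k 0 - v (k + 1) 0) = 0 := by
    calc ∑ k : Fin n, (v k 0 + v (k + 1) 0) * (v k 0 - v (k + 1) 0)
        = ∑ k : Fin n, (0 - (v (k + 1) 0 * v (k + 1) 0 - v k 0 * v k 0)) :=
          Finset.sum_congr rfl (fun k _ => by ring)
      _ = 0 - 0 := by rw [Finset.sum_sub_distrib, tele (fun k => v k 0 * v k 0),
            Finset.sum_const, smul_zero]
      _ = 0 := by ring
  have h5 : ∑ k : Fin n, (v k 1 + v (k + 1) 1) * (v k 0 - v (k + 1) 0) = 2 * A := by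
    calc ∑ k : Fin n, (v k 1 + v (k + 1) 1) * (v k 0 - v (k + 1) 0)
        = ∑ k : Fin n, ((v k 0 * v (k + 1) 1 - v (k + 1) 0 * v k 1)
            + (v k 0 * v k 1 - v (k + 1) 0 * v (k + 1) 1)) :=
          Finset.sum_congr rfl (fun k _ => by ring)
      _ = 2 * A + ∑ k : Fin n, (0 - (v (k + 1) 0 * v (k + 1) 1 - v k 0 * v k 1)) := by
          rw [Finset.sum_add_distrib, hcross]
          congr 1
          exact Finset.sum_congr rfl (fun k _ => by ring)
      _ = 2 * A := by
          rw [Finset.sum_sub_distrib, tele (fun k => v k 0 * v k 1),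
            Finset.sum_const, smul_zero]
          ring
  have h1a : ∑ k : Fin n, (v (k + 1) 1 - v k 1) = 0 := tele (fun k => v k 1)
  have h1b : ∑ k : Fin n, (v k 0 - v (k + 1) 0) = 0 := by
    have := tele (fun k => v k 0)
    calc ∑ k : Fin n, (v k 0 - v (k + 1) 0)
        = ∑ k : Fin n, (0 - (v (k + 1) 0 - v k 0)) :=
          Finset.sum_congr rfl (fun k _ => by ring)
      _ = 0 := by
          rw [Finset.sum_sub_distrib, tele (fun k => v k 0), Finset.sum_const, smul_zero]
          ring
  have happ : ∀ (F : Fin n → EuclideanSpace ℝ (Fin 2)) (j : Fin 2),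
      (∑ k : Fin n, F k) j = ∑ k : Fin n, F k j := by
    intro F j
    exact map_sum (EuclideanSpace.proj j : EuclideanSpace ℝ (Fin 2) →L[ℝ] ℝ) F Finset.univ
  ext i
  simp only [PiLp.smul_apply, smul_eq_mul]
  have hrot0 : ∀ w : EuclideanSpace ℝ (Fin 2), rot w 0 = w 1 := fun w => rfl
  have hrot1 : ∀ w : EuclideanSpace ℝ (Fin 2), rot w 1 = -(w 0) := fun w => rfl
  have hφ' : ∀ k : Fin n, φ ((2 : ℝ)⁻¹ • (v k + v (k + 1)))
      = c + (g 0 * (2⁻¹ * (v k 0 + v (k + 1) 0)) + g 1 * (2⁻¹ * (v k 1 + v (k + 1) 1))) := by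
    intro k
    rw [hφ]
    congr 1
    rw [PiLp.inner_apply]
    simp [Fin.sum_univ_two, PiLp.smul_apply, PiLp.add_apply, smul_eq_mul]
    ring
  fin_cases i
  · have hsum : ∑ k : Fin n, φ ((2 : ℝ)⁻¹ • (v k + v (k + 1))) * rot (v (k + 1) - v k) 0
        = g 0 * A := by
      calc ∑ k : Fin n, φ ((2 : ℝ)⁻¹ • (v k + v (k + 1))) * rot (v (k + 1) - v k) 0
          = ∑ k : Fin n, (c * (v (k + 1) 1 - v k 1)
              + (g 0 * 2⁻¹ * ((v k 0 + v (k + 1) 0) * (v (k + 1) 1 - v k 1))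
              + g 1 * 2⁻¹ * ((v k 1 + v (k + 1) 1) * (v (k + 1) 1 - v k 1)))) := by
            refine Finset.sum_congr rfl (fun k _ => ?_)
            rw [hφ' k, hrot0]
            simp only [PiLp.sub_apply]
            ring
        _ = c * (∑ k : Fin n, (v (k + 1) 1 - v k 1))
              + (g 0 * 2⁻¹ * ∑ k : Fin n, (v k 0 + v (k + 1) 0) * (v (k + 1) 1 - v k 1)
              + g 1 * 2⁻¹ * ∑ k : Fin n, (v k 1 + v (k + 1) 1) * (v (k + 1) 1 - v k 1)) := by
            rw [Finset.sum_add_distrib, Finset.sum_add_distrib, ← Finset.mul_sum,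
              ← Finset.mul_sum, ← Finset.mul_sum]
        _ = g 0 * A := by rw [h1a, h2, h3]; ring
    rw [show ((0 : Fin 2) = ⟨0, by norm_num⟩) from rfl] at hsum
    simp only [happ, PiLp.smul_apply, smul_eq_mul] at *
    rw [hsum]
    field_simp
  · have hsum : ∑ k : Fin n, φ ((2 : ℝ)⁻¹ • (v k + v (k + 1))) * rot (v (k + 1) - v k) 1
        = g 1 * A := by
      calc ∑ k : Fin n, φ ((2 : ℝ)⁻¹ • (v k + v (k + 1))) * rot (v (k + 1) - v k) 1
          = ∑ k : Fin n, (c * (v k 0 - v (k + 1) 0)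
              + (g 0 * 2⁻¹ * ((v k 0 + v (k + 1) 0) * (v k 0 - v (k + 1) 0))
              + g 1 * 2⁻¹ * ((v k 1 + v (k + 1) 1) * (v k 0 - v (k + 1) 0)))) := by
            refine Finset.sum_congr rfl (fun k _ => ?_)
            rw [hφ' k, hrot1]
            simp only [PiLp.sub_apply]
            ring
        _ = c * (∑ k : Fin n, (v k 0 - v (k + 1) 0))
              + (g 0 * 2⁻¹ * ∑ k : Fin n, (v k 0 + v (k + 1) 0) * (v k 0 - v (k + 1) 0)
              + g 1 * 2⁻¹ * ∑ k : Fin n, (v k 1 + v (k + 1) 1) * (v k 0 - v (k + 1) 0)) := by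
            rw [Finset.sum_add_distrib, Finset.sum_add_distrib, ← Finset.mul_sum,
              ← Finset.mul_sum, ← Finset.mul_sum]
        _ = g 1 * A := by rw [h1b, h4, h5]; ring
    rw [show ((1 : Fin 2) = ⟨1, by norm_num⟩) from rfl] at hsum
    simp only [happ, PiLp.smul_apply, smul_eq_mul] at *
    rw [hsum]
    field_simp
end

section
/- Let E = EuclideanSpace ℝ (Fin d), let U ⊆ E be an open convex set, and let φ : E → ℝ be twice continuously differentiable on U with ‖iteratedFDeriv ℝ 2 φ z‖ ≤ M for all z ∈ U. Let x ∈ U, b ∈ E, and δ₁ ≠ δ₂ be real numbers such that x + δ₁ • b and x + δ₂ • b (and the segments joining them to x) lie in U. Then |(φ(x + δ₂ • b) − φ(x + δ₁ • b))/(δ₂ − δ₁) − ⟪b, gradient φ x⟫| ≤ M ‖b‖² (δ₁² + δ₂²) / (2 |δ₂ − δ₁|). -/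
open scoped RealInnerProductSpace BigOperators

theorem quad_taylor (d : ℕ)
    (U : Set (EuclideanSpace ℝ (Fin d))) (hU : IsOpen U) (hUconv : Convex ℝ U)
    (φ : EuclideanSpace ℝ (Fin d) → ℝ) (hφ : ContDiffOn ℝ 2 φ U)
    (M : ℝ) (hM : ∀ z ∈ U, ‖iteratedFDeriv ℝ 2 φ z‖ ≤ M)
    (x : EuclideanSpace ℝ (Fin d)) (hx : x ∈ U)
    (b : EuclideanSpace ℝ (Fin d)) (δ : ℝ) (hδU : x + δ • b ∈ U) :
    |φ (x + δ • b) - φ x - δ * (fderiv ℝ φ x b)| ≤ M * ‖b‖ ^ 2 * δ ^ 2 / 2 := by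
  have hM0 : 0 ≤ M := le_trans (norm_nonneg _) (hM x hx)
  -- second derivative bound
  have hsnd : ∀ z ∈ U, ‖fderiv ℝ (fderiv ℝ φ) z‖ ≤ M := by
    intro z hz
    refine le_trans ?_ (hM z hz)
    refine ContinuousLinearMap.opNorm_le_bound (fderiv ℝ (fderiv ℝ φ) z) (norm_nonneg _) fun u => ?_
    refine ContinuousLinearMap.opNorm_le_bound (fderiv ℝ (fderiv ℝ φ) z u) (by positivity) fun v => ?_
    have h2 := iteratedFDeriv_two_apply (𝕜 := ℝ) φ z ![u, v]
    simp only [Matrix.cons_val_zero, Matrix.cons_val_one, Matrix.head_cons] at h2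
    calc ‖fderiv ℝ (fderiv ℝ φ) z u v‖ = ‖iteratedFDeriv ℝ 2 φ z ![u, v]‖ := by rw [h2]
      _ ≤ ‖iteratedFDeriv ℝ 2 φ z‖ * ∏ i, ‖(![u, v]) i‖ :=
          (iteratedFDeriv ℝ 2 φ z).le_opNorm _
      _ = ‖iteratedFDeriv ℝ 2 φ z‖ * ‖u‖ * ‖v‖ := by
          simp [Fin.prod_univ_two, mul_assoc]
  -- fderiv φ is C¹ on U, hence differentiable
  have hder : ContDiffOn ℝ 1 (fderiv ℝ φ) U := hφ.fderiv_of_isOpen hU (by norm_num)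
  have hdiff2 : ∀ z ∈ U, DifferentiableAt ℝ (fderiv ℝ φ) z := fun z hz =>
    ((hder.differentiableOn (by norm_num)) z hz).differentiableAt (hU.mem_nhds hz)
  have hdiff : ∀ z ∈ U, DifferentiableAt ℝ φ z := fun z hz =>
    ((hφ.differentiableOn (by norm_num)) z hz).differentiableAt (hU.mem_nhds hz)
  have hlip : ∀ z ∈ U, ‖fderiv ℝ φ z - fderiv ℝ φ x‖ ≤ M * ‖z - x‖ := fun z hz =>
    hUconv.norm_image_sub_le_of_norm_fderiv_le hdiff2 hsnd hx hz
  -- segment membership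
  have hmem : ∀ t ∈ Set.uIcc (0 : ℝ) δ, x + t • b ∈ U := by
    intro t ht
    rcases eq_or_ne δ 0 with h0 | h0
    · subst h0; simp only [Set.uIcc_self, Set.mem_singleton_iff] at ht
      subst ht; simpa using hx
    · have key : x + (t / δ) • (δ • b) ∈ U := by
        refine hUconv.add_smul_mem hx (by simpa using hδU) ⟨?_, ?_⟩
        · rcases le_or_gt 0 δ with h | h
          · have := Set.uIcc_of_le h ▸ ht
            exact div_nonneg this.1 h
          · have := Set.uIcc_of_ge h.le ▸ ht
            exact div_nonneg_iff.mpr (Or.inr ⟨this.2, h.le⟩)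
        · rcases le_or_gt 0 δ with h | h
          · have h' := Set.uIcc_of_le h ▸ ht
            exact div_le_one_of_le₀ h'.2 h
          · have h' := Set.uIcc_of_ge h.le ▸ ht
            rw [div_le_one_iff]
            exact Or.inr (Or.inr ⟨h, h'.1⟩)
      rwa [smul_smul, div_mul_cancel₀ _ h0] at key
  -- derivative of g t = φ (x + t • b)
  have hline : ∀ t : ℝ, HasDerivAt (fun s : ℝ => x + s • b) b t := by
    intro t
    simpa using ((hasDerivAt_id t).smul_const b).const_add x
  have hg : ∀ t ∈ Set.uIcc (0 : ℝ) δ,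
      HasDerivAt (fun s => φ (x + s • b)) (fderiv ℝ φ (x + t • b) b) t := by
    intro t ht
    exact ((hdiff _ (hmem t ht)).hasFDerivAt).comp_hasDerivAt t (hline t)
  -- integrability of the derivative
  have hcont : ContinuousOn (fun t => fderiv ℝ φ (x + t • b) b) (Set.uIcc (0 : ℝ) δ) := by
    apply ContinuousOn.clm_apply _ continuousOn_const
    exact (hφ.continuousOn_fderiv_of_isOpen hU (by norm_num)).comp
      (Continuous.continuousOn (by continuity)) hmem
  have hint : IntervalIntegrable (fun t => fderiv ℝ φ (x + t • b) b) MeasureTheory.volume 0 δ :=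
    hcont.intervalIntegrable
  have hftc : ∫ t in (0:ℝ)..δ, fderiv ℝ φ (x + t • b) b = φ (x + δ • b) - φ x := by
    have := intervalIntegral.integral_eq_sub_of_hasDerivAt hg hint
    simpa using this
  -- rewrite the target as an integral
  have hre : φ (x + δ • b) - φ x - δ * (fderiv ℝ φ x b)
      = ∫ t in (0:ℝ)..δ, (fderiv ℝ φ (x + t • b) b - fderiv ℝ φ x b) := by
    rw [intervalIntegral.integral_sub hint intervalIntegrable_const, hftc,
      intervalIntegral.integral_const, smul_eq_mul]
    ring
  rw [hre]
  -- bound the integral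
  have hbd : ∀ t ∈ Set.uIcc (0:ℝ) δ,
      ‖fderiv ℝ φ (x + t • b) b - fderiv ℝ φ x b‖ ≤ M * ‖b‖ ^ 2 * |t| := by
    intro t ht
    have h1 : fderiv ℝ φ (x + t • b) b - fderiv ℝ φ x b
        = (fderiv ℝ φ (x + t • b) - fderiv ℝ φ x) b := by simp
    rw [h1]
    calc ‖(fderiv ℝ φ (x + t • b) - fderiv ℝ φ x) b‖
        ≤ ‖fderiv ℝ φ (x + t • b) - fderiv ℝ φ x‖ * ‖b‖ :=
          ContinuousLinearMap.le_opNorm _ _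
      _ ≤ (M * ‖x + t • b - x‖) * ‖b‖ := by
          have := hlip _ (hmem t ht)
          exact mul_le_mul_of_nonneg_right this (norm_nonneg _)
      _ = M * ‖b‖ ^ 2 * |t| := by
          have : x + t • b - x = t • b := by abel
          rw [this, norm_smul]
          simp [Real.norm_eq_abs]
          ring
  have hgint : IntervalIntegrable (fun t => M * ‖b‖ ^ 2 * |t|) MeasureTheory.volume 0 δ := by
    exact (continuous_const.mul continuous_abs).intervalIntegrable _ _
  have hnorm := intervalIntegral.norm_integral_le_abs_of_norm_le
    (f := fun t => fderiv ℝ φ (x + t • b) b - fderiv ℝ φ x b)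
    (g := fun t => M * ‖b‖ ^ 2 * |t|) (μ := MeasureTheory.volume) (a := 0) (b := δ)
    ?_ hgint
  · refine le_trans hnorm ?_
    have habs : ∫ t in (0:ℝ)..δ, M * ‖b‖ ^ 2 * |t| = M * ‖b‖ ^ 2 * ∫ t in (0:ℝ)..δ, |t| :=
      intervalIntegral.integral_const_mul _ _
    rcases le_or_gt 0 δ with h | h
    · have heq : ∫ t in (0:ℝ)..δ, |t| = δ ^ 2 / 2 := by
        rw [intervalIntegral.integral_congr (g := fun t => t) ?_]
        · rw [integral_id]; ring
        · intro t ht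
          rw [Set.uIcc_of_le h] at ht
          exact abs_of_nonneg ht.1
      rw [habs, heq, abs_of_nonneg (by positivity)]
      ring_nf; exact le_refl _
    · have heq : ∫ t in (0:ℝ)..δ, |t| = -(δ ^ 2 / 2) := by
        rw [intervalIntegral.integral_congr (g := fun t => -t) ?_]
        · rw [intervalIntegral.integral_neg, integral_id]; ring
        · intro t ht
          rw [Set.uIcc_of_ge h.le] at ht
          exact abs_of_nonpos ht.2
      rw [habs, heq]
      rw [mul_neg, abs_of_nonpos (neg_nonpos.mpr (by positivity)), neg_neg]
      ring_nf; exact le_refl _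
  · refine (MeasureTheory.ae_restrict_iff' measurableSet_uIoc).mpr ?_
    filter_upwards with t ht
    exact hbd t (Set.uIoc_subset_uIcc ht)

/-- Truncation error of the two-point difference quotient approximation of the
directional derivative `⟪b, ∇φ x⟫` along `b`, for a `C²` function whose second
derivative is bounded by `M` on an open convex set `U` (the segments joining
`x + δ₁ • b` and `x + δ₂ • b` to `x` lie in `U` by convexity). -/
theorem difference_quotient_directional_derivative_error (d : ℕ)
    (U : Set (EuclideanSpace ℝ (Fin d))) (hU : IsOpen U) (hUconv : Convex ℝ U)
    (φ : EuclideanSpace ℝ (Fin d) → ℝ) (hφ : ContDiffOn ℝ 2 φ U)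
    (M : ℝ) (hM : ∀ z ∈ U, ‖iteratedFDeriv ℝ 2 φ z‖ ≤ M)
    (x : EuclideanSpace ℝ (Fin d)) (hx : x ∈ U)
    (b : EuclideanSpace ℝ (Fin d)) (δ₁ δ₂ : ℝ) (hδ : δ₁ ≠ δ₂)
    (h₁ : x + δ₁ • b ∈ U) (h₂ : x + δ₂ • b ∈ U) :
    |(φ (x + δ₂ • b) - φ (x + δ₁ • b)) / (δ₂ - δ₁) - ⟪b, gradient φ x⟫|
      ≤ M * ‖b‖ ^ 2 * (δ₁ ^ 2 + δ₂ ^ 2) / (2 * |δ₂ - δ₁|) := by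
  have e1 := quad_taylor d U hU hUconv φ hφ M hM x hx b δ₁ h₁
  have e2 := quad_taylor d U hU hUconv φ hφ M hM x hx b δ₂ h₂
  have hD : δ₂ - δ₁ ≠ 0 := sub_ne_zero.mpr (Ne.symm hδ)
  have hDabs : |δ₂ - δ₁| ≠ 0 := abs_ne_zero.mpr hD
  have hgrad : ⟪b, gradient φ x⟫ = fderiv ℝ φ x b := by
    rw [real_inner_comm]
    exact InnerProductSpace.toDual_symm_apply
  rw [hgrad]
  have key : (φ (x + δ₂ • b) - φ (x + δ₁ • b)) / (δ₂ - δ₁) - fderiv ℝ φ x b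
      = ((φ (x + δ₂ • b) - φ x - δ₂ * fderiv ℝ φ x b)
          - (φ (x + δ₁ • b) - φ x - δ₁ * fderiv ℝ φ x b)) / (δ₂ - δ₁) := by
    field_simp
    ring
  rw [key, abs_div]
  have hrhs : M * ‖b‖ ^ 2 * (δ₁ ^ 2 + δ₂ ^ 2) / (2 * |δ₂ - δ₁|)
      = (M * ‖b‖ ^ 2 * δ₂ ^ 2 / 2 + M * ‖b‖ ^ 2 * δ₁ ^ 2 / 2) / |δ₂ - δ₁| := by
    field_simp
    ring
  rw [hrhs]
  gcongr
  exact (abs_sub _ _).trans (add_le_add e2 e1)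
end

section
/- Let E = EuclideanSpace ℝ (Fin d), let x_i ∈ E, and let (a_f)_{f ∈ Fin m}, (b_f)_{f ∈ Fin m} be vectors in E and (x_f)_{f ∈ Fin m} points in E. Let P : E →L[ℝ] E be the continuous linear map P g = ∑_f ⟪b_f, g⟫ • a_f, and suppose P admits a continuous linear inverse P⁻¹. Let φ : E → ℝ be differentiable with gradient that is L-Lipschitz on a set containing x_i and all x_f. Then the gradient reconstructed from the exact directional derivatives satisfies ‖P⁻¹ (∑_f ⟪b_f, gradient φ x_f⟫ • a_f) − gradient φ x_i‖ ≤ ‖P⁻¹‖ · L · ∑_f ‖a_f‖ ‖b_f‖ ‖x_f − x_i‖. -/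
open scoped RealInnerProductSpace BigOperators

/-- Error bound `E₁` for the generalized gradient reconstruction: if the dyadic-sum
operator `P g = ∑ f ⟪b f, g⟫ • a f` has a continuous linear inverse `Pinv` and the
gradient of `φ` is `L`-Lipschitz on a set containing the cell center `xᵢ` and all
neighbourhood points `x f`, then the gradient reconstructed from the exact
directional derivatives at the points `x f` satisfies
`‖Pinv (∑ f ⟪b f, ∇φ (x f)⟫ • a f) - ∇φ xᵢ‖ ≤ ‖Pinv‖ * L * ∑ f ‖a f‖ ‖b f‖ ‖x f - xᵢ‖`. -/
theorem generalized_reconstruction_error_E1 (d m : ℕ)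
    (xi : EuclideanSpace ℝ (Fin d))
    (a b x : Fin m → EuclideanSpace ℝ (Fin d))
    (P Pinv : EuclideanSpace ℝ (Fin d) →L[ℝ] EuclideanSpace ℝ (Fin d))
    (hP : ∀ g, P g = ∑ f : Fin m, ⟪b f, g⟫ • a f)
    (hleft : Function.LeftInverse Pinv P)
    (hright : Function.RightInverse Pinv P)
    (φ : EuclideanSpace ℝ (Fin d) → ℝ)
    (hdiff : Differentiable ℝ φ)
    (s : Set (EuclideanSpace ℝ (Fin d))) (hxi : xi ∈ s) (hxf : ∀ f, x f ∈ s)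
    (L : NNReal)
    (hL : LipschitzOnWith L (fun z => gradient φ z) s) :
    ‖Pinv (∑ f : Fin m, ⟪b f, gradient φ (x f)⟫ • a f) - gradient φ xi‖
      ≤ ‖Pinv‖ * L * ∑ f : Fin m, ‖a f‖ * ‖b f‖ * ‖x f - xi‖ := by
  set g := gradient φ
  have key : (∑ f : Fin m, ⟪b f, g (x f)⟫ • a f)
      = P (g xi) + ∑ f : Fin m, ⟪b f, g (x f) - g xi⟫ • a f := by
    rw [hP, ← Finset.sum_add_distrib]
    refine Finset.sum_congr rfl fun f _ => ?_
    rw [inner_sub_right, sub_smul]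
    abel
  have h1 : Pinv (∑ f : Fin m, ⟪b f, g (x f)⟫ • a f) - g xi
      = Pinv (∑ f : Fin m, ⟪b f, g (x f) - g xi⟫ • a f) := by
    rw [key, map_add, hleft (g xi)]
    abel
  rw [h1]
  calc ‖Pinv (∑ f : Fin m, ⟪b f, g (x f) - g xi⟫ • a f)‖
      ≤ ‖Pinv‖ * ‖∑ f : Fin m, ⟪b f, g (x f) - g xi⟫ • a f‖ := Pinv.le_opNorm _
    _ ≤ ‖Pinv‖ * (L * ∑ f : Fin m, ‖a f‖ * ‖b f‖ * ‖x f - xi‖) := by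
        apply mul_le_mul_of_nonneg_left _ (norm_nonneg _)
        calc ‖∑ f : Fin m, ⟪b f, g (x f) - g xi⟫ • a f‖
            ≤ ∑ f : Fin m, ‖⟪b f, g (x f) - g xi⟫ • a f‖ := norm_sum_le _ _
          _ ≤ ∑ f : Fin m, (L : ℝ) * (‖a f‖ * ‖b f‖ * ‖x f - xi‖) := by
              apply Finset.sum_le_sum
              intro f _
              rw [norm_smul]
              have hlip : ‖g (x f) - g xi‖ ≤ L * ‖x f - xi‖ := by
                have := hL.norm_sub_le (hxf f) hxi
                simpa using this
              have hcs : ‖⟪b f, g (x f) - g xi⟫‖ ≤ ‖b f‖ * (L * ‖x f - xi‖) :=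
                le_trans (norm_inner_le_norm _ _)
                  (mul_le_mul_of_nonneg_left hlip (norm_nonneg _))
              calc ‖⟪b f, g (x f) - g xi⟫‖ * ‖a f‖
                  ≤ (‖b f‖ * (L * ‖x f - xi‖)) * ‖a f‖ :=
                    mul_le_mul_of_nonneg_right hcs (norm_nonneg _)
                _ = (L : ℝ) * (‖a f‖ * ‖b f‖ * ‖x f - xi‖) := by ring
          _ = (L : ℝ) * ∑ f : Fin m, ‖a f‖ * ‖b f‖ * ‖x f - xi‖ := by
              rw [Finset.mul_sum]
    _ = ‖Pinv‖ * L * ∑ f : Fin m, ‖a f‖ * ‖b f‖ * ‖x f - xi‖ := by ring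
end

section
/- Let E = EuclideanSpace ℝ (Fin d), let U ⊆ E be an open convex set, and let φ : E → ℝ be twice continuously differentiable on U with ‖iteratedFDeriv ℝ 2 φ z‖ ≤ M for all z ∈ U. Let x_i ∈ U, let (a_f)_{f ∈ Fin m}, (b_f)_{f ∈ Fin m} be vectors in E, (x_f)_{f ∈ Fin m} points of U, and for each f let δ_{f,1} ≠ δ_{f,2} be reals with x_{f,1} = x_f + δ_{f,1} • b_f ∈ U and x_{f,2} = x_f + δ_{f,2} • b_f ∈ U. Let P : E →L[ℝ] E, P g = ∑_f ⟪b_f, g⟫ • a_f, admit a continuous linear inverse P⁻¹. Then the fully discrete reconstructed gradient G = P⁻¹ ∑_f ((φ(x_{f,2}) − φ(x_{f,1}))/(δ_{f,2} − δ_{f,1})) • a_f satisfies ‖G − gradient φ x_i‖ ≤ ‖P⁻¹‖ · M · ∑_f ‖a_f‖ ( ‖b_f‖ ‖x_f − x_i‖ + ‖b_f‖² (δ_{f,1}² + δ_{f,2}²)/(2 |δ_{f,2} − δ_{f,1}|) ). -/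
open scoped RealInnerProductSpace BigOperators

/-- Quadratic Taylor remainder bound on a convex set, from a Lipschitz bound on the
Fréchet derivative. -/
private theorem taylor_quad_aux {E : Type*} [NormedAddCommGroup E] [NormedSpace ℝ E]
    {φ : E → ℝ} {U : Set E} (hUconv : Convex ℝ U) {M : ℝ} (hM0 : 0 ≤ M)
    (hdiff : ∀ z ∈ U, HasFDerivAt φ (fderiv ℝ φ z) z)
    (lip : ∀ y ∈ U, ∀ z ∈ U, ‖fderiv ℝ φ y - fderiv ℝ φ z‖ ≤ M * ‖y - z‖)
    {y z : E} (hy : y ∈ U) (hz : z ∈ U) :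
    |φ y - φ z - fderiv ℝ φ z (y - z)| ≤ M / 2 * ‖y - z‖ ^ 2 := by
  set v := y - z with hv
  set f : ℝ → ℝ := fun t => φ (z + t • v) - t * fderiv ℝ φ z v - φ z with hf
  set f' : ℝ → ℝ := fun t => fderiv ℝ φ (z + t • v) v - fderiv ℝ φ z v with hf'
  set B : ℝ → ℝ := fun t => M * ‖v‖ ^ 2 * t ^ 2 / 2 with hB
  set B' : ℝ → ℝ := fun t => M * ‖v‖ ^ 2 * t with hB'
  have hmem : ∀ t ∈ Set.Icc (0 : ℝ) 1, z + t • v ∈ U := fun t ht =>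
    hUconv.add_smul_sub_mem hz hy ht
  have hcurve : ∀ t : ℝ, HasDerivAt (fun s : ℝ => z + s • v) v t := by
    intro t
    simpa using ((hasDerivAt_id t).smul_const v).const_add z
  have hfd : ∀ t ∈ Set.Icc (0 : ℝ) 1, HasDerivAt f (f' t) t := by
    intro t ht
    have h1 : HasDerivAt (fun s : ℝ => φ (z + s • v)) (fderiv ℝ φ (z + t • v) v) t := by
      exact (hdiff _ (hmem t ht)).comp_hasDerivAt t (hcurve t)
    have h2 : HasDerivAt (fun s : ℝ => s * fderiv ℝ φ z v) (fderiv ℝ φ z v) t := by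
      simpa using (hasDerivAt_id t).mul_const (fderiv ℝ φ z v)
    simpa [hf, hf'] using (h1.sub h2).sub_const (φ z)
  have hBd : ∀ t : ℝ, HasDerivAt B (B' t) t := by
    intro t
    have := ((hasDerivAt_pow 2 t).const_mul (M * ‖v‖ ^ 2)).div_const 2
    convert this using 1
    any_goals rfl
    simp [hB']
    ring
  have hbound : ∀ t ∈ Set.Ico (0 : ℝ) 1, ‖f' t‖ ≤ B' t := by
    intro t ht
    have htIcc : t ∈ Set.Icc (0 : ℝ) 1 := ⟨ht.1, ht.2.le⟩
    have h1 : ‖f' t‖ = |(fderiv ℝ φ (z + t • v) - fderiv ℝ φ z) v| := by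
      simp [hf', Real.norm_eq_abs]
    have h2 : |(fderiv ℝ φ (z + t • v) - fderiv ℝ φ z) v|
        ≤ ‖fderiv ℝ φ (z + t • v) - fderiv ℝ φ z‖ * ‖v‖ := by
      simpa [Real.norm_eq_abs] using
        (fderiv ℝ φ (z + t • v) - fderiv ℝ φ z).le_opNorm v
    have h3 : ‖fderiv ℝ φ (z + t • v) - fderiv ℝ φ z‖ ≤ M * ‖(z + t • v) - z‖ :=
      lip _ (hmem t htIcc) _ hz
    have h4 : ‖(z + t • v) - z‖ = t * ‖v‖ := by
      simp [norm_smul, Real.norm_eq_abs, abs_of_nonneg ht.1]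
    rw [h1]
    calc |(fderiv ℝ φ (z + t • v) - fderiv ℝ φ z) v|
        ≤ (M * (t * ‖v‖)) * ‖v‖ := h2.trans (by
          apply mul_le_mul_of_nonneg_right _ (norm_nonneg v)
          rw [← h4]; exact h3)
      _ = B' t := by rw [hB']; ring
  have hcont : ContinuousOn f (Set.Icc (0 : ℝ) 1) := fun t ht =>
    ((hfd t ht).continuousAt).continuousWithinAt
  have hzero : ‖f 0‖ ≤ B 0 := by simp [hf, hB]
  have := image_norm_le_of_norm_deriv_right_le_deriv_boundary hcont
    (fun t ht => ((hfd t ⟨ht.1, ht.2.le⟩).hasDerivWithinAt)) hzero hBd hbound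
    (Set.right_mem_Icc.mpr zero_le_one)
  have hone : f 1 = φ y - φ z - fderiv ℝ φ z (y - z) := by
    simp [hf, hv]
    ring
  have hB1 : B 1 = M / 2 * ‖y - z‖ ^ 2 := by
    simp only [hB, ← hv]
    ring
  rw [hone, Real.norm_eq_abs, hB1] at this
  exact this

/-- Total error bound (combining terms `E₁` and `E₂`) for the fully discrete
generalized gradient reconstruction
`G = Pinv (∑ f ((φ (x f + δ₂ f • b f) - φ (x f + δ₁ f • b f)) / (δ₂ f - δ₁ f)) • a f)`
for a `C²` function whose second derivative is bounded by `M` on an open convex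
set `U` containing the cell center, the neighbourhood points and the evaluation
points. -/
theorem generalized_reconstruction_total_error (d m : ℕ)
    (U : Set (EuclideanSpace ℝ (Fin d))) (hU : IsOpen U) (hUconv : Convex ℝ U)
    (φ : EuclideanSpace ℝ (Fin d) → ℝ) (hφ : ContDiffOn ℝ 2 φ U)
    (M : ℝ) (hM : ∀ z ∈ U, ‖iteratedFDeriv ℝ 2 φ z‖ ≤ M)
    (xi : EuclideanSpace ℝ (Fin d)) (hxi : xi ∈ U)
    (a b x : Fin m → EuclideanSpace ℝ (Fin d)) (hx : ∀ f, x f ∈ U)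
    (δ₁ δ₂ : Fin m → ℝ) (hδ : ∀ f, δ₁ f ≠ δ₂ f)
    (h₁ : ∀ f, x f + δ₁ f • b f ∈ U) (h₂ : ∀ f, x f + δ₂ f • b f ∈ U)
    (P Pinv : EuclideanSpace ℝ (Fin d) →L[ℝ] EuclideanSpace ℝ (Fin d))
    (hP : ∀ g, P g = ∑ f : Fin m, ⟪b f, g⟫ • a f)
    (hleft : Function.LeftInverse Pinv P)
    (hright : Function.RightInverse Pinv P) :
    ‖Pinv (∑ f : Fin m,
          ((φ (x f + δ₂ f • b f) - φ (x f + δ₁ f • b f)) / (δ₂ f - δ₁ f)) • a f)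
        - gradient φ xi‖
      ≤ ‖Pinv‖ * M * ∑ f : Fin m, ‖a f‖ *
          (‖b f‖ * ‖x f - xi‖
            + ‖b f‖ ^ 2 * ((δ₁ f) ^ 2 + (δ₂ f) ^ 2) / (2 * |δ₂ f - δ₁ f|)) := by
  classical
  have hM0 : (0 : ℝ) ≤ M := le_trans (norm_nonneg _) (hM xi hxi)
  set D := fderiv ℝ φ with hDdef
  have hdiff : ∀ z ∈ U, HasFDerivAt φ (D z) z := fun z hz =>
    ((hφ.differentiableOn (by norm_num)).differentiableAt (hU.mem_nhds hz)).hasFDerivAt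
  have hD1 : ContDiffOn ℝ 1 D U := hφ.fderiv_of_isOpen hU (by norm_num)
  have hDd : ∀ z ∈ U, HasFDerivWithinAt D (fderiv ℝ D z) U z := fun z hz =>
    (((hD1.differentiableOn one_ne_zero).differentiableAt
      (hU.mem_nhds hz)).hasFDerivAt).hasFDerivWithinAt
  have hbound : ∀ z ∈ U, ‖fderiv ℝ D z‖ ≤ M := by
    intro z hz
    calc ‖fderiv ℝ D z‖ = ‖iteratedFDeriv ℝ 0 (fderiv ℝ D) z‖ :=
          by rw [norm_iteratedFDeriv_zero]
      _ = ‖iteratedFDeriv ℝ 1 D z‖ := norm_iteratedFDeriv_fderiv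
      _ = ‖iteratedFDeriv ℝ 2 φ z‖ := by rw [hDdef]; exact norm_iteratedFDeriv_fderiv
      _ ≤ M := hM z hz
  have lip : ∀ y ∈ U, ∀ z ∈ U, ‖D y - D z‖ ≤ M * ‖y - z‖ := fun y hy z hz =>
    hUconv.norm_image_sub_le_of_norm_hasFDerivWithin_le hDd hbound hz hy
  have hg : ∀ v : EuclideanSpace ℝ (Fin d), ⟪v, gradient φ xi⟫ = D xi v := by
    intro v
    have h1 : HasFDerivAt φ
        (InnerProductSpace.toDual ℝ (EuclideanSpace ℝ (Fin d)) (gradient φ xi)) xi :=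
      (((hφ.differentiableOn (by norm_num)).differentiableAt
        (hU.mem_nhds hxi))).hasGradientAt.hasFDerivAt
    have h2 := (hdiff xi hxi).unique h1
    calc ⟪v, gradient φ xi⟫ = ⟪gradient φ xi, v⟫ := real_inner_comm _ _
      _ = InnerProductSpace.toDual ℝ (EuclideanSpace ℝ (Fin d)) (gradient φ xi) v :=
          (InnerProductSpace.toDual_apply_apply).symm
      _ = D xi v := by rw [← h2]
  set c : Fin m → ℝ :=
    fun f => (φ (x f + δ₂ f • b f) - φ (x f + δ₁ f • b f)) / (δ₂ f - δ₁ f) with hc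
  set T : Fin m → ℝ := fun f => ‖b f‖ * ‖x f - xi‖
      + ‖b f‖ ^ 2 * ((δ₁ f) ^ 2 + (δ₂ f) ^ 2) / (2 * |δ₂ f - δ₁ f|) with hT
  have key : ∀ f : Fin m, |c f - D xi (b f)| ≤ M * T f := by
    intro f
    have hne : δ₂ f - δ₁ f ≠ 0 := sub_ne_zero.mpr (hδ f).symm
    have habs : (0 : ℝ) < |δ₂ f - δ₁ f| := abs_pos.mpr hne
    have hR : ∀ δ : ℝ, x f + δ • b f ∈ U →
        |φ (x f + δ • b f) - φ (x f) - D (x f) (δ • b f)|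
          ≤ M / 2 * (δ ^ 2 * ‖b f‖ ^ 2) := by
      intro δ hmem
      have h := taylor_quad_aux hUconv hM0 hdiff lip hmem (hx f)
      rw [add_sub_cancel_left] at h
      calc |φ (x f + δ • b f) - φ (x f) - D (x f) (δ • b f)|
          ≤ M / 2 * ‖δ • b f‖ ^ 2 := h
        _ = M / 2 * (δ ^ 2 * ‖b f‖ ^ 2) := by
            rw [norm_smul, mul_pow, Real.norm_eq_abs, sq_abs]
    set R₁ := φ (x f + δ₁ f • b f) - φ (x f) - D (x f) (δ₁ f • b f) with hR₁
    set R₂ := φ (x f + δ₂ f • b f) - φ (x f) - D (x f) (δ₂ f • b f) with hR₂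
    have hid : c f - D (x f) (b f) = (R₂ - R₁) / (δ₂ f - δ₁ f) := by
      have hs1 : D (x f) (δ₁ f • b f) = δ₁ f * D (x f) (b f) := by simp
      have hs2 : D (x f) (δ₂ f • b f) = δ₂ f * D (x f) (b f) := by simp
      rw [hc, hR₂, hR₁, hs1, hs2]
      field_simp
      ring
    have hpart1 : |c f - D (x f) (b f)|
        ≤ M * (‖b f‖ ^ 2 * ((δ₁ f) ^ 2 + (δ₂ f) ^ 2) / (2 * |δ₂ f - δ₁ f|)) := by
      rw [hid, abs_div]
      have hnum : |R₂ - R₁| ≤ M / 2 * ((δ₁ f) ^ 2 * ‖b f‖ ^ 2)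
          + M / 2 * ((δ₂ f) ^ 2 * ‖b f‖ ^ 2) := by
        calc |R₂ - R₁| ≤ |R₂| + |R₁| := abs_sub _ _
          _ ≤ M / 2 * ((δ₂ f) ^ 2 * ‖b f‖ ^ 2) + M / 2 * ((δ₁ f) ^ 2 * ‖b f‖ ^ 2) :=
              add_le_add (hR _ (h₂ f)) (hR _ (h₁ f))
          _ = _ := by ring
      calc |R₂ - R₁| / |δ₂ f - δ₁ f|
          ≤ (M / 2 * ((δ₁ f) ^ 2 * ‖b f‖ ^ 2) + M / 2 * ((δ₂ f) ^ 2 * ‖b f‖ ^ 2))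
              / |δ₂ f - δ₁ f| := by
            exact div_le_div_of_nonneg_right hnum habs.le |>.trans_eq rfl
        _ = M * (‖b f‖ ^ 2 * ((δ₁ f) ^ 2 + (δ₂ f) ^ 2) / (2 * |δ₂ f - δ₁ f|)) := by
            field_simp
    have hpart2 : |D (x f) (b f) - D xi (b f)| ≤ M * (‖b f‖ * ‖x f - xi‖) := by
      have h1 : |(D (x f) - D xi) (b f)| ≤ ‖D (x f) - D xi‖ * ‖b f‖ := by
        simpa [Real.norm_eq_abs] using (D (x f) - D xi).le_opNorm (b f)
      have h2 : ‖D (x f) - D xi‖ * ‖b f‖ ≤ (M * ‖x f - xi‖) * ‖b f‖ :=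
        mul_le_mul_of_nonneg_right (lip _ (hx f) _ hxi) (norm_nonneg _)
      calc |D (x f) (b f) - D xi (b f)| = |(D (x f) - D xi) (b f)| := by
            simp
        _ ≤ (M * ‖x f - xi‖) * ‖b f‖ := h1.trans h2
        _ = M * (‖b f‖ * ‖x f - xi‖) := by ring
    calc |c f - D xi (b f)|
        ≤ |c f - D (x f) (b f)| + |D (x f) (b f) - D xi (b f)| := abs_sub_le _ _ _
      _ ≤ M * (‖b f‖ ^ 2 * ((δ₁ f) ^ 2 + (δ₂ f) ^ 2) / (2 * |δ₂ f - δ₁ f|))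
            + M * (‖b f‖ * ‖x f - xi‖) := add_le_add hpart1 hpart2
      _ = M * T f := by rw [hT]; ring
  have hrw : Pinv (∑ f : Fin m, c f • a f) - gradient φ xi
      = Pinv ((∑ f : Fin m, c f • a f) - P (gradient φ xi)) := by
    rw [map_sub, hleft]
  have hsum : (∑ f : Fin m, c f • a f) - P (gradient φ xi)
      = ∑ f : Fin m, (c f - D xi (b f)) • a f := by
    rw [hP, ← Finset.sum_sub_distrib]
    exact Finset.sum_congr rfl fun f _ => by rw [hg (b f), sub_smul]
  calc ‖Pinv (∑ f : Fin m, c f • a f) - gradient φ xi‖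
      = ‖Pinv ((∑ f : Fin m, c f • a f) - P (gradient φ xi))‖ := by rw [hrw]
    _ ≤ ‖Pinv‖ * ‖(∑ f : Fin m, c f • a f) - P (gradient φ xi)‖ := Pinv.le_opNorm _
    _ ≤ ‖Pinv‖ * ∑ f : Fin m, M * (‖a f‖ * T f) := by
        apply mul_le_mul_of_nonneg_left _ (norm_nonneg Pinv)
        rw [hsum]
        calc ‖∑ f : Fin m, (c f - D xi (b f)) • a f‖
            ≤ ∑ f : Fin m, ‖(c f - D xi (b f)) • a f‖ := norm_sum_le _ _
          _ ≤ ∑ f : Fin m, M * (‖a f‖ * T f) := by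
              apply Finset.sum_le_sum
              intro f _
              rw [norm_smul, Real.norm_eq_abs]
              calc |c f - D xi (b f)| * ‖a f‖ ≤ (M * T f) * ‖a f‖ :=
                    mul_le_mul_of_nonneg_right (key f) (norm_nonneg _)
                _ = M * (‖a f‖ * T f) := by ring
    _ = ‖Pinv‖ * M * ∑ f : Fin m, ‖a f‖ * T f := by
        rw [mul_assoc]
        congr 1
        rw [Finset.mul_sum]
end

section
/- Let E = EuclideanSpace ℝ (Fin d), let x_i ∈ E, and for f ∈ Fin m let a_f, b_f ∈ E and y_f ∈ E with y_f ≠ x_i; set r_f = (y_f − x_i)/‖y_f − x_i‖. Let α ∈ ℝ be arbitrary, and suppose the dyadic-sum operator P : E →ₗ[ℝ] E, P g = ∑_f ⟪b_f, g⟫ • a_f, is bijective. Then for every affine scalar field φ(x) = c + ⟪g, x⟫, the α-damped directional derivative D_f = α ‖b_f‖ (φ(y_f) − φ(x_i))/‖y_f − x_i‖ + ⟪b_f − α ‖b_f‖ • r_f, g⟫ equals ⟪b_f, g⟫ for every f, and consequently the flexible reconstruction is exact for every α: the unique G with P G = ∑_f D_f • a_f is G = g. -/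
open scoped RealInnerProductSpace BigOperators

/-- The generalized flexible (α-damped) gradient scheme is exact for affine scalar
fields, for every value of the damping parameter `α`: with
`r f = (y f - xᵢ)/‖y f - xᵢ‖`, the α-damped directional derivative
`D f = α ‖b f‖ (φ (y f) - φ xᵢ)/‖y f - xᵢ‖ + ⟪b f - α ‖b f‖ • r f, g⟫`
equals `⟪b f, g⟫` for every `f`, and consequently the unique `G` with
`P G = ∑ f D f • a f` is `G = g`, where `P g = ∑ f ⟪b f, g⟫ • a f` is the
bijective dyadic-sum operator. -/
theorem flexible_scheme_exact_for_affine (d m : ℕ)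
    (xi : EuclideanSpace ℝ (Fin d))
    (a b y : Fin m → EuclideanSpace ℝ (Fin d))
    (hy : ∀ f, y f ≠ xi)
    (α : ℝ)
    (P : EuclideanSpace ℝ (Fin d) →ₗ[ℝ] EuclideanSpace ℝ (Fin d))
    (hP : ∀ g, P g = ∑ f : Fin m, ⟪b f, g⟫ • a f)
    (hbij : Function.Bijective P)
    (φ : EuclideanSpace ℝ (Fin d) → ℝ) (c : ℝ) (g : EuclideanSpace ℝ (Fin d))
    (hφ : ∀ z, φ z = c + ⟪g, z⟫) :
    (∀ f : Fin m,
        α * ‖b f‖ * (φ (y f) - φ xi) / ‖y f - xi‖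
          + ⟪b f - (α * ‖b f‖) • (‖y f - xi‖⁻¹ • (y f - xi)), g⟫
        = ⟪b f, g⟫)
    ∧ ∀ G : EuclideanSpace ℝ (Fin d),
        P G = ∑ f : Fin m,
            (α * ‖b f‖ * (φ (y f) - φ xi) / ‖y f - xi‖
              + ⟪b f - (α * ‖b f‖) • (‖y f - xi‖⁻¹ • (y f - xi)), g⟫) • a f
        → G = g := by
  have key : ∀ f : Fin m,
      α * ‖b f‖ * (φ (y f) - φ xi) / ‖y f - xi‖
        + ⟪b f - (α * ‖b f‖) • (‖y f - xi‖⁻¹ • (y f - xi)), g⟫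
      = ⟪b f, g⟫ := by
    intro f
    have hdiff : φ (y f) - φ xi = ⟪g, y f - xi⟫ := by
      rw [hφ, hφ, inner_sub_right]; ring
    rw [hdiff, inner_sub_left, inner_smul_left, inner_smul_left,
      real_inner_comm (y f - xi) g]
    have hnorm : ‖y f - xi‖ ≠ 0 := by
      simp [sub_eq_zero, hy f]
    simp only [conj_trivial]
    field_simp
    ring
  refine ⟨key, fun G hG => ?_⟩
  apply hbij.injective
  rw [hG, hP]
  exact Finset.sum_congr rfl fun f _ => by rw [key f]
end

section
/- Let E = EuclideanSpace ℝ (Fin d), let x ≠ y be points of E, r = (y − x)/‖y − x‖, b ∈ E, and α ∈ ℝ. Let φ(z) = c + ⟪g, z⟫ be an affine scalar field, and let G_x, G_y ∈ E be approximate gradients with ‖G_x − g‖ ≤ Ε and ‖G_y − g‖ ≤ Ε. Then the two-step α-damped directional derivative satisfies |α ‖b‖ (φ(y) − φ(x))/‖y − x‖ + ⟪b − α ‖b‖ • r, (G_x + G_y)/2⟫ − ⟪b, g⟫| ≤ ‖b − α ‖b‖ • r‖ · Ε. -/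
open scoped RealInnerProductSpace BigOperators

/-- Accuracy of the two-step α-damped directional derivative: if `φ z = c + ⟪g, z⟫`
is affine and the precomputed approximate gradients `Gx`, `Gy` at the two cell
centers `x ≠ y` satisfy `‖Gx - g‖ ≤ E` and `‖Gy - g‖ ≤ E`, then with
`r = (y - x)/‖y - x‖` the two-step α-damped directional derivative satisfies
`|α ‖b‖ (φ y - φ x)/‖y - x‖ + ⟪b - α ‖b‖ • r, (Gx + Gy)/2⟫ - ⟪b, g⟫| ≤ ‖b - α ‖b‖ • r‖ * E`. -/
theorem two_step_flexible_directional_derivative_error (d : ℕ)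
    (x y : EuclideanSpace ℝ (Fin d)) (hxy : x ≠ y)
    (b : EuclideanSpace ℝ (Fin d)) (α : ℝ)
    (φ : EuclideanSpace ℝ (Fin d) → ℝ) (c : ℝ) (g : EuclideanSpace ℝ (Fin d))
    (hφ : ∀ z, φ z = c + ⟪g, z⟫)
    (Gx Gy : EuclideanSpace ℝ (Fin d)) (E : ℝ)
    (hGx : ‖Gx - g‖ ≤ E) (hGy : ‖Gy - g‖ ≤ E) :
    |α * ‖b‖ * (φ y - φ x) / ‖y - x‖
        + ⟪b - (α * ‖b‖) • (‖y - x‖⁻¹ • (y - x)), (2 : ℝ)⁻¹ • (Gx + Gy)⟫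
        - ⟪b, g⟫|
      ≤ ‖b - (α * ‖b‖) • (‖y - x‖⁻¹ • (y - x))‖ * E := by
  have hne : ‖y - x‖ ≠ 0 := by
    simpa [sub_eq_zero] using fun h => hxy (h.symm)
  set w : EuclideanSpace ℝ (Fin d) := b - (α * ‖b‖) • (‖y - x‖⁻¹ • (y - x)) with hw
  have hphi : φ y - φ x = ⟪g, y - x⟫ := by
    simp [hφ, inner_sub_right]
  have key : α * ‖b‖ * (φ y - φ x) / ‖y - x‖
        + ⟪w, (2 : ℝ)⁻¹ • (Gx + Gy)⟫ - ⟪b, g⟫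
      = ⟪w, (2 : ℝ)⁻¹ • (Gx + Gy) - g⟫ := by
    rw [inner_sub_right]
    have : ⟪w, g⟫ = ⟪b, g⟫ - α * ‖b‖ * (φ y - φ x) / ‖y - x‖ := by
      rw [hw, inner_sub_left, inner_smul_left, inner_smul_left, hphi,
        real_inner_comm]
      field_simp
      simp only [conj_trivial, one_div]
      rw [real_inner_comm g (y - x)]
      linear_combination (-(α * ‖b‖ * ⟪g, y - x⟫)) * mul_inv_cancel₀ hne
    rw [this]; ring
  rw [key]
  have hCS := abs_real_inner_le_norm w ((2 : ℝ)⁻¹ • (Gx + Gy) - g)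
  refine hCS.trans (mul_le_mul_of_nonneg_left ?_ (norm_nonneg _))
  have : (2 : ℝ)⁻¹ • (Gx + Gy) - g = (2 : ℝ)⁻¹ • ((Gx - g) + (Gy - g)) := by
    rw [smul_add, smul_add]
    module
  rw [this, norm_smul]
  have hE : (0 : ℝ) ≤ E := le_trans (norm_nonneg _) hGx
  calc ‖(2:ℝ)⁻¹‖ * ‖(Gx - g) + (Gy - g)‖ ≤ (2:ℝ)⁻¹ * (‖Gx - g‖ + ‖Gy - g‖) := by
        rw [norm_inv, Real.norm_two]
        exact mul_le_mul_of_nonneg_left (norm_add_le _ _) (by norm_num)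
    _ ≤ (2:ℝ)⁻¹ * (E + E) := by
        exact mul_le_mul_of_nonneg_left (add_le_add hGx hGy) (by norm_num)
    _ = E := by ring
end
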